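/- Let α > 0, θ = arctan α, t ∈ (0, π/(2α)), and P, Q ∈ ℝ. Define the function Φ(x,p) = π^{-1/2} |sin θ / sin(θ+αt)|^{1/2} · exp(-iP(x-Q)) · exp( ( -cos θ sin(αt)(p-P)² - sin θ cos(αt)(x-Q)² - 2i cos θ sin(αt)(x-Q)(p-P) ) / (2 sin(αt+θ)) ). Then ∫_{ℝ²} |Φ(x,p)|² · √(sin(2αt)/(2α)) dx dp = 1. -/

import Mathlib

open Real MeasureTheory

/-- The transformed coherent state `U_τ ψ_{(P,Q)}` for the hyperbolic
Hamiltonian `H = (1/2)(p² - α²x²)`, with `θ = arctan α`, `τ = it`. -/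
noncomputable def KSHstate (α t P Q : ℝ) (x p : ℝ) : ℂ :=
  (Real.pi : ℂ) ^ (-(1/2 : ℂ)) *
    ((|Real.sin (Real.arctan α) / Real.sin (Real.arctan α + α * t)| ^ ((1:ℝ)/2) : ℝ) : ℂ) *
    Complex.exp (-Complex.I * P * (x - Q)) *
    Complex.exp
      ((-(Real.cos (Real.arctan α) * Real.sin (α * t) : ℂ) * ((p : ℂ) - P) ^ 2
          - (Real.sin (Real.arctan α) * Real.cos (α * t) : ℂ) * ((x : ℂ) - Q) ^ 2
          - 2 * Complex.I * (Real.cos (Real.arctan α) * Real.sin (α * t) : ℂ)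
              * ((x : ℂ) - Q) * ((p : ℂ) - P))
        / (2 * (Real.sin (α * t + Real.arctan α) : ℂ)))

set_option maxHeartbeats 1000000 in
/-- The transformed coherent state is normalized:
`∫_{ℝ²} |Φ(x,p)|² √(sin(2αt)/(2α)) dx dp = 1` for `t ∈ (0, π/(2α))`. -/
theorem statement7 (α t P Q : ℝ) (hα : 0 < α)
    (ht : t ∈ Set.Ioo 0 (π / (2 * α))) :
    (∫ z : ℝ × ℝ,
        ‖KSHstate α t P Q z.1 z.2‖ ^ 2
          * Real.sqrt (Real.sin (2 * α * t) / (2 * α)))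
      = 1 := by
  obtain ⟨ht0, ht1⟩ := ht
  set θ := Real.arctan α with hθdef
  have hπ : (0:ℝ) < π := Real.pi_pos
  have hθpos : 0 < θ := by
    rw [hθdef, ← Real.arctan_zero]
    exact Real.arctan_strictMono hα
  have hθlt : θ < π/2 := Real.arctan_lt_pi_div_two α
  have hs0 : 0 < α * t := mul_pos hα ht0
  have hs1 : α * t < π/2 := by
    rw [lt_div_iff₀ (by positivity : (0:ℝ) < 2*α)] at ht1
    nlinarith
  have hsin : 0 < Real.sin (α*t) :=
    Real.sin_pos_of_pos_of_lt_pi hs0 (by linarith)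
  have hcos : 0 < Real.cos (α*t) := Real.cos_pos_of_mem_Ioo ⟨by linarith, hs1⟩
  have hsθ : 0 < Real.sin θ := Real.sin_pos_of_pos_of_lt_pi hθpos (by linarith)
  have hcθ : 0 < Real.cos θ := Real.cos_pos_of_mem_Ioo ⟨by linarith, hθlt⟩
  have hS : 0 < Real.sin (α*t + θ) :=
    Real.sin_pos_of_pos_of_lt_pi (by linarith) (by linarith)
  have htan : Real.sin θ = α * Real.cos θ := by
    have h := Real.tan_arctan α
    rw [Real.tan_eq_sin_div_cos] at h
    field_simp at h
    linarith
  set S := Real.sin (α*t + θ) with hSdef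
  set A := Real.cos θ * Real.sin (α*t) with hAdef
  set B := Real.sin θ * Real.cos (α*t) with hBdef
  have hA : 0 < A := mul_pos hcθ hsin
  have hB : 0 < B := mul_pos hsθ hcos
  set K := Real.sqrt (Real.sin (2*α*t) / (2*α)) with hKdef
  -- pointwise computation of |Φ|²
  have habs : ∀ x p : ℝ, ‖KSHstate α t P Q x p‖ ^ 2
      = (1/π) * (Real.sin θ / S) *
        (Real.exp (-(B/S) * (x-Q)^2) * Real.exp (-(A/S) * (p-P)^2)) := by
    intro x p
    unfold KSHstate
    rw [← hθdef, add_comm θ (α*t), ← hSdef]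
    have e1 : (-Complex.I * (P:ℂ) * ((x:ℂ) - (Q:ℂ)))
        = ((-(P*(x-Q)) : ℝ) : ℂ) * Complex.I := by push_cast; ring
    have hSC : ((S:ℝ):ℂ) ≠ 0 := by exact_mod_cast hS.ne'
    have e2 : ((-(Real.cos θ * Real.sin (α * t) : ℂ) * ((p : ℂ) - P) ^ 2
          - (Real.sin θ * Real.cos (α * t) : ℂ) * ((x : ℂ) - Q) ^ 2
          - 2 * Complex.I * (Real.cos θ * Real.sin (α * t) : ℂ)
              * ((x : ℂ) - Q) * ((p : ℂ) - P))
        / (2 * (S : ℂ)))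
        = (((-(A*(p-P)^2) - B*(x-Q)^2)/(2*S) : ℝ) : ℂ)
          + (((-(2*A*(x-Q)*(p-P)))/(2*S) : ℝ) : ℂ) * Complex.I := by
      rw [hAdef, hBdef]
      push_cast
      field_simp
      ring
    rw [e1, e2]
    rw [norm_mul, norm_mul, norm_mul]
    rw [Complex.norm_exp_ofReal_mul_I]
    rw [Complex.norm_cpow_eq_rpow_re_of_pos hπ]
    rw [Complex.norm_real, Real.norm_eq_abs]
    have habs2 : |(|Real.sin θ / S| ^ ((1:ℝ)/2))| = |Real.sin θ / S| ^ ((1:ℝ)/2) :=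
      abs_of_nonneg (Real.rpow_nonneg (abs_nonneg _) _)
    rw [habs2]
    have hre : ((((-(A*(p-P)^2) - B*(x-Q)^2)/(2*S) : ℝ) : ℂ)
          + (((-(2*A*(x-Q)*(p-P)))/(2*S) : ℝ) : ℂ) * Complex.I).re
        = (-(A*(p-P)^2) - B*(x-Q)^2)/(2*S) := by
      simp only [Complex.add_re, Complex.mul_re, Complex.I_re, Complex.I_im,
        Complex.ofReal_re, Complex.ofReal_im]
      ring
    rw [Complex.norm_exp, hre]
    have hexp2 : ((-(1/2 : ℂ)).re) = -(1/2 : ℝ) := by norm_num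
    rw [hexp2]
    rw [mul_pow, mul_pow, mul_pow]
    have p1 : (π ^ (-(1/2:ℝ))) ^ 2 = 1/π := by
      rw [← Real.rpow_natCast (π ^ (-(1/2:ℝ))) 2, ← Real.rpow_mul hπ.le]
      norm_num [Real.rpow_neg_one]
    have p2 : (|Real.sin θ / S| ^ ((1:ℝ)/2)) ^ 2 = Real.sin θ / S := by
      rw [← Real.rpow_natCast (|Real.sin θ / S| ^ ((1:ℝ)/2)) 2,
        ← Real.rpow_mul (abs_nonneg _)]
      norm_num
      exact (div_pos hsθ hS).le
    have p3 : (Real.exp ((-(A*(p-P)^2) - B*(x-Q)^2)/(2*S))) ^ 2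
        = Real.exp (-(B/S) * (x-Q)^2) * Real.exp (-(A/S) * (p-P)^2) := by
      rw [← Real.exp_add, sq, ← Real.exp_add]
      congr 1
      field_simp
      ring
    rw [p1, p2, p3]
    ring
  -- rewrite the integrand and factor the integral
  have hfun : (fun z : ℝ × ℝ =>
        ‖KSHstate α t P Q z.1 z.2‖ ^ 2 * K)
      = fun z : ℝ × ℝ => ((1/π) * (Real.sin θ / S) * K) *
          (Real.exp (-(B/S) * (z.1-Q)^2) * Real.exp (-(A/S) * (z.2-P)^2)) := by
    funext z
    rw [habs z.1 z.2]
    ring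
  rw [hfun]
  rw [MeasureTheory.integral_const_mul]
  have hsplit : (∫ z : ℝ × ℝ,
        Real.exp (-(B/S) * (z.1-Q)^2) * Real.exp (-(A/S) * (z.2-P)^2))
      = (∫ x : ℝ, Real.exp (-(B/S) * (x-Q)^2)) * (∫ p : ℝ, Real.exp (-(A/S) * (p-P)^2)) := by
    rw [MeasureTheory.Measure.volume_eq_prod]
    exact MeasureTheory.integral_prod_mul (fun x : ℝ => Real.exp (-(B/S) * (x-Q)^2))
      (fun p : ℝ => Real.exp (-(A/S) * (p-P)^2))
  rw [hsplit]
  have g1 : (∫ x : ℝ, Real.exp (-(B/S) * (x-Q)^2)) = Real.sqrt (π / (B/S)) := by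
    rw [show (fun x : ℝ => Real.exp (-(B/S) * (x-Q)^2))
        = fun x : ℝ => (fun y : ℝ => Real.exp (-(B/S) * y^2)) (x - Q) from rfl]
    rw [MeasureTheory.integral_sub_right_eq_self (fun y : ℝ => Real.exp (-(B/S) * y^2)) Q]
    exact integral_gaussian (B/S)
  have g2 : (∫ p : ℝ, Real.exp (-(A/S) * (p-P)^2)) = Real.sqrt (π / (A/S)) := by
    rw [show (fun p : ℝ => Real.exp (-(A/S) * (p-P)^2))
        = fun p : ℝ => (fun y : ℝ => Real.exp (-(A/S) * y^2)) (p - P) from rfl]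
    rw [MeasureTheory.integral_sub_right_eq_self (fun y : ℝ => Real.exp (-(A/S) * y^2)) P]
    exact integral_gaussian (A/S)
  rw [g1, g2]
  -- final arithmetic: show the product equals 1
  have hK2 : K^2 = Real.sin (α*t) * Real.cos (α*t) / α := by
    rw [hKdef, Real.sq_sqrt]
    · rw [show (2*α*t) = 2*(α*t) by ring, Real.sin_two_mul]
      field_simp
    · rw [show (2*α*t) = 2*(α*t) by ring, Real.sin_two_mul]
      positivity
  have hq1 : (Real.sqrt (π / (B/S)))^2 = π / (B/S) :=
    Real.sq_sqrt (by positivity)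
  have hq2 : (Real.sqrt (π / (A/S)))^2 = π / (A/S) :=
    Real.sq_sqrt (by positivity)
  set X := 1/π * (Real.sin θ / S) * K * (Real.sqrt (π / (B/S)) * Real.sqrt (π / (A/S))) with hX
  have hX0 : 0 ≤ X := by
    have hK0 : 0 ≤ K := Real.sqrt_nonneg _
    positivity
  have hX2 : X^2 = 1 := by
    have expand : X^2 = (1/π)^2 * (Real.sin θ / S)^2 * K^2 *
        ((Real.sqrt (π/(B/S)))^2 * (Real.sqrt (π/(A/S)))^2) := by rw [hX]; ring
    rw [expand, hq1, hq2, hK2, hBdef, hAdef, htan]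
    have hπ' := hπ.ne'
    have hS' := hS.ne'
    have hα' := hα.ne'
    have hcθ' := hcθ.ne'
    have hsin' := hsin.ne'
    have hcos' := hcos.ne'
    field_simp
  nlinarith [hX2, hX0]
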